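/- Let f = 3^{e}·ℓ₁···ℓ_n be the conductor of k/k₀, with distinct primes ℓ_j ≠ 3, and set u = #{1 ≤ j ≤ n : ℓ_j ≡ ±1 (mod 9)}, v = #{1 ≤ j ≤ n : ℓ_j ≡ ±2 or ±4 (mod 9)} (so n = u + v). Then the multiplicity m(f), i.e. the number of normalized cube-free radicands d > 1 whose conductor equals f, is: m(f) = 2^n if e = 2; m(f) = 2^u · X_v if e = 1; m(f) = 2^u · X_{v−1} if e = 0; where X_r = (2^r − (−1)^r)/3 for r ≥ −1 (in particular X_{−1} = 1/2, X_0 = 0, X_1 = 1, X_2 = 1). -/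

import Mathlib

open IntermediateField NumberField
open scoped nonZeroDivisors

set_option synthInstance.maxHeartbeats 1000000
set_option maxHeartbeats 2000000

noncomputable section

instance : Fact (Nat.Prime 3) := ⟨by norm_num⟩

/-- A positive integer is cube-free if no prime cube divides it. -/
def IsCubeFree (d : ℕ) : Prop := ∀ p : ℕ, p.Prime → ¬ (p ^ 3 ∣ d)

/-- The conductor `f` of `k/k₀` for `k = ℚ(∛d, ζ₃)`: it equals `3^e·ℓ₁⋯ℓ_n` where the `ℓ_j`
are the prime divisors of `d` distinct from `3`, and `e = 2` if `3 ∣ d` (species 1a),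
`e = 1` if `3 ∤ d` and `d ≢ ±1 (mod 9)` (species 1b), `e = 0` if `3 ∤ d` and
`d ≡ ±1 (mod 9)` (species 2). -/
def radicandConductor (d : ℕ) : ℕ :=
  (if 3 ∣ d then 9 else if d % 9 = 1 ∨ d % 9 = 8 then 1 else 3) *
    ∏ p ∈ d.primeFactors.erase 3, p

/-- `d` is a normalized cube-free radicand: writing `d = d₁d₂²` with `d₁, d₂` squarefree and
coprime, one has `d₁ > d₂ ≥ 1`. -/
def IsNormalizedRadicand (d : ℕ) : Prop :=
  1 < d ∧ IsCubeFree d ∧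
    (∏ p ∈ d.primeFactors.filter (fun p => p ^ 2 ∣ d), p) <
      (∏ p ∈ d.primeFactors.filter (fun p => ¬ p ^ 2 ∣ d), p)

/-- The multiplicity `m(f)` of a conductor `f`: the number of (pairwise non-isomorphic)
pure cubic fields `ℚ(∛d)` with normalized radicand `d` whose conductor equals `f`. -/
def conductorMultiplicity (f : ℕ) : ℕ :=
  Nat.card {d : ℕ // IsNormalizedRadicand d ∧ radicandConductor d = f}

/-- The sequence `X_r = (2^r - (-1)^r)/3`, defined for `r ≥ -1` (so `X_{-1} = 1/2`). -/
def Xseq (r : ℤ) : ℚ := ((2 : ℚ) ^ r - (-1 : ℚ) ^ r) / 3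

def chi9 (x : ZMod 9) : ZMod 3 :=
  if x = 1 ∨ x = 8 then 0 else if x = 2 ∨ x = 7 then 1 else 2

def U9 : Finset (ZMod 9) := {1, 2, 4, 5, 7, 8}

lemma chi9_mul : ∀ x ∈ U9, ∀ y ∈ U9, x * y ∈ U9 ∧ chi9 (x * y) = chi9 x + chi9 y := by decide

lemma one_mem_U9 : (1 : ZMod 9) ∈ U9 := by decide

lemma chi9_one : chi9 1 = 0 := by decide

lemma chi9_eq_zero_iff : ∀ x ∈ U9, (chi9 x = 0 ↔ x = 1 ∨ x = 8) := by decide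

lemma cast_mem_U9 {ℓ : ℕ} (hp : ℓ.Prime) (h3 : ℓ ≠ 3) : (ℓ : ZMod 9) ∈ U9 := by
  have h3d : ¬ 3 ∣ ℓ := by
    intro h
    exact h3 (((Nat.prime_dvd_prime_iff_eq (by norm_num) hp).mp h).symm)
  have h1 : ℓ % 3 ≠ 0 := fun h => h3d (Nat.dvd_of_mod_eq_zero h)
  have h2 : ℓ % 9 % 3 = ℓ % 3 := Nat.mod_mod_of_dvd ℓ (by norm_num)
  have h4 : ℓ % 9 < 9 := Nat.mod_lt _ (by norm_num)
  have hc : (ℓ : ZMod 9) = ((ℓ % 9 : ℕ) : ZMod 9) := (ZMod.natCast_mod ℓ 9).symm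
  have : ℓ % 9 = 1 ∨ ℓ % 9 = 2 ∨ ℓ % 9 = 4 ∨ ℓ % 9 = 5 ∨ ℓ % 9 = 7 ∨ ℓ % 9 = 8 := by omega
  rcases this with h|h|h|h|h|h <;> rw [hc, h] <;> decide

def kexp (T : Finset ℕ) (ℓ : ℕ) : ℕ := if ℓ ∈ T then 2 else 1

def chiSum (S T : Finset ℕ) : ZMod 3 := ∑ ℓ ∈ S, (kexp T ℓ : ZMod 3) * chi9 (ℓ : ZMod 9)

lemma chi9_prod' (S T : Finset ℕ) (hS : ∀ ℓ ∈ S, (ℓ : ZMod 9) ∈ U9) :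
    (∏ ℓ ∈ S, (ℓ : ZMod 9) ^ kexp T ℓ) ∈ U9 ∧
    chi9 (∏ ℓ ∈ S, (ℓ : ZMod 9) ^ kexp T ℓ) = chiSum S T := by
  classical
  induction S using Finset.induction with
  | empty => simpa [chiSum] using ⟨one_mem_U9, chi9_one⟩
  | @insert a s ha ih =>
    have hmem : ∀ ℓ ∈ s, (ℓ : ZMod 9) ∈ U9 := fun ℓ hℓ => hS ℓ (Finset.mem_insert_of_mem hℓ)
    obtain ⟨hU, hchi⟩ := ih hmem
    have haU : (a : ZMod 9) ∈ U9 := hS a (Finset.mem_insert_self a s)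
    rw [Finset.prod_insert ha]
    have hs : chiSum (insert a s) T = (kexp T a : ZMod 3) * chi9 (a : ZMod 9) + chiSum s T := by
      rw [chiSum, Finset.sum_insert ha]; rfl
    by_cases hT : a ∈ T
    · have hk : kexp T a = 2 := by simp [kexp, hT]
      rw [hk] at hs ⊢
      have h1 := chi9_mul _ haU _ hU
      have h2 := chi9_mul _ haU _ h1.1
      rw [pow_two, mul_assoc]
      refine ⟨h2.1, ?_⟩
      rw [h2.2, h1.2, hs, hchi]
      push_cast
      ring
    · have hk : kexp T a = 1 := by simp [kexp, hT]
      rw [hk] at hs ⊢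
      have h1 := chi9_mul _ haU _ hU
      rw [pow_one]
      refine ⟨h1.1, ?_⟩
      rw [h1.2, hs, hchi]
      push_cast
      ring

def cfgD (S : Finset ℕ) (a : ℕ) (T : Finset ℕ) : ℕ := 3 ^ a * ∏ ℓ ∈ S, ℓ ^ kexp T ℓ

lemma prodpow_ne_zero {S T : Finset ℕ} (hS : ∀ ℓ ∈ S, ℓ.Prime) :
    ∏ ℓ ∈ S, ℓ ^ kexp T ℓ ≠ 0 := by
  rw [Finset.prod_ne_zero_iff]
  exact fun ℓ hℓ => pow_ne_zero _ (hS ℓ hℓ).pos.ne'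

lemma cfgD_ne_zero {S T : Finset ℕ} (hS : ∀ ℓ ∈ S, ℓ.Prime) (a : ℕ) : cfgD S a T ≠ 0 :=
  mul_ne_zero (pow_ne_zero _ (by norm_num)) (prodpow_ne_zero hS)

lemma cfgD_factorization {S T : Finset ℕ} (hS : ∀ ℓ ∈ S, ℓ.Prime) (a : ℕ) (q : ℕ) :
    (cfgD S a T).factorization q =
      (if 3 = q then a else 0) + (if q ∈ S then kexp T q else 0) := by
  rw [cfgD, Nat.factorization_mul (pow_ne_zero _ (by norm_num)) (prodpow_ne_zero hS),
    Nat.factorization_prod (fun ℓ hℓ => pow_ne_zero _ (hS ℓ hℓ).pos.ne'),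
    Nat.Prime.factorization_pow (by norm_num)]
  have : ∀ ℓ ∈ S, ((ℓ ^ kexp T ℓ).factorization) = Finsupp.single ℓ (kexp T ℓ) :=
    fun ℓ hℓ => Nat.Prime.factorization_pow (hS ℓ hℓ)
  rw [Finset.sum_congr rfl this]
  simp only [Finsupp.add_apply, Finsupp.single_apply, Finset.sum_apply',
    Finset.sum_ite_eq' S q]


section Struct
variable {S T : Finset ℕ} (hS : ∀ ℓ ∈ S, ℓ.Prime ∧ ℓ ≠ 3) (hT : T ⊆ S) {a : ℕ}

include hS

lemma three_not_mem_S : 3 ∉ S := fun h => (hS 3 h).2 rfl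

lemma hSp' : ∀ ℓ ∈ S, ℓ.Prime := fun ℓ hℓ => (hS ℓ hℓ).1

lemma pow_dvd_cfgD_iff {q k : ℕ} (hq : q.Prime) :
    q ^ k ∣ cfgD S a T ↔
      k ≤ (if 3 = q then a else 0) + (if q ∈ S then kexp T q else 0) := by
  rw [Nat.Prime.pow_dvd_iff_le_factorization hq (cfgD_ne_zero (hSp' hS) a),
    cfgD_factorization (hSp' hS)]

lemma dvd_cfgD_iff {q : ℕ} (hq : q.Prime) :
    q ∣ cfgD S a T ↔
      1 ≤ (if 3 = q then a else 0) + (if q ∈ S then kexp T q else 0) := by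
  conv_lhs => rw [← pow_one q]
  exact pow_dvd_cfgD_iff hS hq

lemma mem_primeFactors_cfgD' {q : ℕ} :
    q ∈ (cfgD S a T).primeFactors ↔ (cfgD S a T).factorization q ≠ 0 := by
  rw [← Nat.support_factorization, Finsupp.mem_support_iff]

lemma cfgD_primeFactors_erase : (cfgD S a T).primeFactors.erase 3 = S := by
  ext q
  rw [Finset.mem_erase, mem_primeFactors_cfgD' hS, cfgD_factorization (hSp' hS)]
  constructor
  · rintro ⟨hq3, hq⟩
    by_contra hqS
    rw [if_neg (fun h => hq3 h.symm), if_neg hqS] at hq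
    exact hq rfl
  · intro hq
    have hq3 : q ≠ 3 := (hS q hq).2
    rw [if_neg (fun h => hq3 h.symm), if_pos hq]
    have : kexp T q ≠ 0 := by unfold kexp; split <;> omega
    exact ⟨hq3, by omega⟩

lemma cfgD_cubeFree (ha : a ≤ 2) : IsCubeFree (cfgD S a T) := by
  intro p hp hdvd
  rw [pow_dvd_cfgD_iff hS hp] at hdvd
  have h3S := three_not_mem_S hS
  by_cases h3 : 3 = p
  · rw [if_pos h3, if_neg (h3 ▸ h3S)] at hdvd; omega
  · rw [if_neg h3] at hdvd
    by_cases hpS : p ∈ S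
    · rw [if_pos hpS] at hdvd; unfold kexp at hdvd; split at hdvd <;> omega
    · rw [if_neg hpS] at hdvd; omega

lemma three_dvd_cfgD_iff : 3 ∣ cfgD S a T ↔ a ≠ 0 := by
  rw [dvd_cfgD_iff hS (by norm_num), if_pos rfl, if_neg (three_not_mem_S hS)]
  omega

include hT

lemma cfgD_filter_sq (ha : a ≤ 2) :
    (cfgD S a T).primeFactors.filter (fun p => p ^ 2 ∣ cfgD S a T) =
      (if a = 2 then insert 3 T else T) := by
  have hSp := hSp' hS
  have h3S := three_not_mem_S hS
  ext q
  constructor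
  · intro h
    rw [Finset.mem_filter] at h
    obtain ⟨hmem, hdvd⟩ := h
    have hq : q.Prime := Nat.prime_of_mem_primeFactors hmem
    rw [pow_dvd_cfgD_iff hS hq] at hdvd
    by_cases h3 : 3 = q
    · subst h3
      rw [if_pos rfl, if_neg h3S] at hdvd
      have : a = 2 := by omega
      rw [if_pos this]
      exact Finset.mem_insert_self _ _
    · rw [if_neg h3] at hdvd
      by_cases hqS : q ∈ S
      · rw [if_pos hqS] at hdvd
        have hqT : q ∈ T := by
          by_contra hqT; unfold kexp at hdvd; rw [if_neg hqT] at hdvd; omega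
        split
        · exact Finset.mem_insert_of_mem hqT
        · exact hqT
      · rw [if_neg hqS] at hdvd; omega
  · intro h
    have hcase : (q = 3 ∧ a = 2) ∨ q ∈ T := by
      split at h
      · rcases Finset.mem_insert.mp h with h' | h'
        · exact Or.inl ⟨h', by assumption⟩
        · exact Or.inr h'
      · exact Or.inr h
    rw [Finset.mem_filter]
    rcases hcase with ⟨hq3, ha2⟩ | hqT
    · subst hq3
      have hdvd : (3:ℕ) ^ 2 ∣ cfgD S a T := by
        rw [pow_dvd_cfgD_iff hS (by norm_num), if_pos rfl, if_neg h3S]; omega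
      refine ⟨Nat.mem_primeFactors.mpr ⟨by norm_num, dvd_trans (dvd_pow_self 3 (by norm_num)) hdvd, cfgD_ne_zero hSp a⟩, hdvd⟩
    · have hqS : q ∈ S := hT hqT
      have hq : q.Prime := hSp q hqS
      have hdvd : q ^ 2 ∣ cfgD S a T := by
        rw [pow_dvd_cfgD_iff hS hq, if_pos hqS]
        unfold kexp; rw [if_pos hqT]; omega
      refine ⟨Nat.mem_primeFactors.mpr ⟨hq, dvd_trans (dvd_pow_self q (by norm_num)) hdvd, cfgD_ne_zero hSp a⟩, hdvd⟩

lemma cfgD_filter_nsq (ha : a ≤ 2) :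
    (cfgD S a T).primeFactors.filter (fun p => ¬ p ^ 2 ∣ cfgD S a T) =
      (if a = 1 then insert 3 (S \ T) else S \ T) := by
  have hSp := hSp' hS
  have h3S := three_not_mem_S hS
  ext q
  constructor
  · intro h
    rw [Finset.mem_filter] at h
    obtain ⟨hmem, hndvd⟩ := h
    have hq : q.Prime := Nat.prime_of_mem_primeFactors hmem
    have hfac : (cfgD S a T).factorization q ≠ 0 := (mem_primeFactors_cfgD' hS).mp hmem
    rw [cfgD_factorization hSp] at hfac
    rw [pow_dvd_cfgD_iff hS hq] at hndvd
    by_cases h3 : 3 = q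
    · rw [if_pos h3, if_neg (h3 ▸ h3S)] at hfac hndvd
      have ha1 : a = 1 := by omega
      rw [if_pos ha1]
      exact h3 ▸ Finset.mem_insert_self _ _
    · rw [if_neg h3] at hfac hndvd
      by_cases hqS : q ∈ S
      · rw [if_pos hqS] at hndvd
        have hqT : q ∉ T := by
          intro hqT; unfold kexp at hndvd; rw [if_pos hqT] at hndvd; omega
        have : q ∈ S \ T := Finset.mem_sdiff.mpr ⟨hqS, hqT⟩
        split
        · exact Finset.mem_insert_of_mem this
        · exact this
      · rw [if_neg hqS] at hfac; omega
  · intro h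
    have hcase : (q = 3 ∧ a = 1) ∨ q ∈ S \ T := by
      split at h
      · rcases Finset.mem_insert.mp h with h' | h'
        · exact Or.inl ⟨h', by assumption⟩
        · exact Or.inr h'
      · exact Or.inr h
    rw [Finset.mem_filter]
    rcases hcase with ⟨hq3, ha1⟩ | hqST
    · subst hq3
      refine ⟨Nat.mem_primeFactors.mpr ⟨by norm_num, (three_dvd_cfgD_iff hS).mpr (by omega), cfgD_ne_zero hSp a⟩, ?_⟩
      rw [pow_dvd_cfgD_iff hS (by norm_num), if_pos rfl, if_neg h3S]; omega
    · obtain ⟨hqS, hqT⟩ := Finset.mem_sdiff.mp hqST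
      have hq : q.Prime := hSp q hqS
      have h3 : ¬ (3 = q) := fun h => h3S (h ▸ hqS)
      refine ⟨Nat.mem_primeFactors.mpr ⟨hq, ?_, cfgD_ne_zero hSp a⟩, ?_⟩
      · rw [dvd_cfgD_iff hS hq, if_neg h3, if_pos hqS]
        unfold kexp; split <;> omega
      · rw [pow_dvd_cfgD_iff hS hq, if_neg h3, if_pos hqS]
        unfold kexp; rw [if_neg hqT]; omega

end Struct



section Cond
variable {S T : Finset ℕ} (hS : ∀ ℓ ∈ S, ℓ.Prime ∧ ℓ ≠ 3) (hT : T ⊆ S) {a : ℕ}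

include hS

lemma cfgD_mod9 :
    (cfgD S 0 T % 9 = 1 ∨ cfgD S 0 T % 9 = 8) ↔ chiSum S T = 0 := by
  have hU : ∀ ℓ ∈ S, (ℓ : ZMod 9) ∈ U9 := fun ℓ hℓ => cast_mem_U9 (hS ℓ hℓ).1 (hS ℓ hℓ).2
  obtain ⟨hmem, hchi⟩ := chi9_prod' S T hU
  have hcast : ((cfgD S 0 T : ℕ) : ZMod 9) = ∏ ℓ ∈ S, (ℓ : ZMod 9) ^ kexp T ℓ := by
    rw [cfgD]; push_cast; ring
  have h1 : cfgD S 0 T % 9 = 1 ↔ ((cfgD S 0 T : ℕ) : ZMod 9) = 1 := by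
    rw [show (1 : ZMod 9) = ((1 : ℕ) : ZMod 9) by norm_num, ZMod.natCast_eq_natCast_iff']
  have h8 : cfgD S 0 T % 9 = 8 ↔ ((cfgD S 0 T : ℕ) : ZMod 9) = 8 := by
    rw [show (8 : ZMod 9) = ((8 : ℕ) : ZMod 9) by norm_num, ZMod.natCast_eq_natCast_iff']
  rw [h1, h8, hcast, ← hchi]
  exact (chi9_eq_zero_iff _ hmem).symm

lemma conductor_cfgD (ha : a ≤ 2) :
    radicandConductor (cfgD S a T) =
      (if a ≠ 0 then 9 else if chiSum S T = 0 then 1 else 3) * ∏ ℓ ∈ S, ℓ := by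
  rw [radicandConductor, cfgD_primeFactors_erase hS]
  congr 1
  by_cases h0 : a = 0
  · subst h0
    rw [if_neg (show ¬(0:ℕ) ≠ 0 by simp), if_neg (show ¬ (3 ∣ cfgD S 0 T) by rw [three_dvd_cfgD_iff hS]; simp)]
    exact if_congr (cfgD_mod9 hS) rfl rfl
  · rw [if_pos h0, if_pos ((three_dvd_cfgD_iff hS).mpr h0)]

def speciesOK (S : Finset ℕ) (e a : ℕ) (T : Finset ℕ) : Prop :=
  if e = 2 then a ≠ 0 else (a = 0 ∧ (chiSum S T = 0 ↔ e = 0))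

instance (S : Finset ℕ) (e a : ℕ) (T : Finset ℕ) : Decidable (speciesOK S e a T) := by
  unfold speciesOK chiSum; infer_instance

lemma conductor_eq_iff {e : ℕ} (he : e ≤ 2) (ha : a ≤ 2) :
    radicandConductor (cfgD S a T) = 3 ^ e * ∏ ℓ ∈ S, ℓ ↔ speciesOK S e a T := by
  rw [conductor_cfgD hS ha]
  have hP : 0 < ∏ ℓ ∈ S, ℓ := Finset.prod_pos (fun ℓ hℓ => (hS ℓ hℓ).1.pos)
  rw [Nat.mul_left_inj hP.ne']
  interval_cases e <;> unfold speciesOK <;>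
    (by_cases h0 : a = 0 <;> by_cases hc : chiSum S T = 0 <;> simp [h0, hc])

def normOK (S : Finset ℕ) (a : ℕ) (T : Finset ℕ) : Prop :=
  (if a = 2 then 3 else 1) * ∏ ℓ ∈ T, ℓ < (if a = 1 then 3 else 1) * ∏ ℓ ∈ S \ T, ℓ

instance (S : Finset ℕ) (a : ℕ) (T : Finset ℕ) : Decidable (normOK S a T) := by
  unfold normOK; infer_instance

include hT

lemma one_lt_cfgD (h : a ≠ 0 ∨ S.Nonempty) : 1 < cfgD S a T := by
  have h0 := cfgD_ne_zero (hSp' hS) (T := T) a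
  have h1 : cfgD S a T ≠ 1 := by
    intro hone
    have := cfgD_factorization (T := T) (hSp' hS) a
    rw [hone] at this
    rcases h with h | ⟨ℓ, hℓ⟩
    · have h3 := this 3
      rw [if_pos rfl, if_neg (three_not_mem_S hS)] at h3
      simp [Nat.factorization_one] at h3
      omega
    · have hl := this ℓ
      rw [if_neg (show ¬ (3 = ℓ) from fun hh => three_not_mem_S hS (by rwa [hh])), if_pos hℓ] at hl
      simp [Nat.factorization_one] at hl
      unfold kexp at hl; split at hl <;> omega
  omega

lemma isNorm_iff (ha : a ≤ 2) :
    IsNormalizedRadicand (cfgD S a T) ↔ normOK S a T := by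
  have h3T : 3 ∉ T := fun h => three_not_mem_S hS (hT h)
  have h3ST : 3 ∉ S \ T := fun h => three_not_mem_S hS (Finset.mem_sdiff.mp h).1
  have hd2 : (∏ p ∈ (cfgD S a T).primeFactors.filter (fun p => p ^ 2 ∣ cfgD S a T), p)
      = (if a = 2 then 3 else 1) * ∏ ℓ ∈ T, ℓ := by
    rw [cfgD_filter_sq hS hT ha]
    by_cases h2 : a = 2
    · rw [if_pos h2, if_pos h2, Finset.prod_insert h3T]
    · rw [if_neg h2, if_neg h2, one_mul]
  have hd1 : (∏ p ∈ (cfgD S a T).primeFactors.filter (fun p => ¬ p ^ 2 ∣ cfgD S a T), p)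
      = (if a = 1 then 3 else 1) * ∏ ℓ ∈ S \ T, ℓ := by
    rw [cfgD_filter_nsq hS hT ha]
    by_cases h1 : a = 1
    · rw [if_pos h1, if_pos h1, Finset.prod_insert h3ST]
    · rw [if_neg h1, if_neg h1, one_mul]
  constructor
  · rintro ⟨-, -, hlt⟩
    rw [hd2, hd1] at hlt
    exact hlt
  · intro hn
    have hne : a ≠ 0 ∨ S.Nonempty := by
      by_contra hcon
      push_neg at hcon
      obtain ⟨ha0, hSe⟩ := hcon
      subst hSe
      have hTe : T = ∅ := Finset.subset_empty.mp hT
      subst hTe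
      unfold normOK at hn
      simp [ha0] at hn
    exact ⟨one_lt_cfgD hS hT hne, cfgD_cubeFree hS ha, by rw [hd2, hd1]; exact hn⟩

end Cond

def goodCfg (S : Finset ℕ) (e : ℕ) : Finset (ℕ × Finset ℕ) :=
  ((Finset.range 3) ×ˢ S.powerset).filter
    (fun p => speciesOK S e p.1 p.2 ∧ normOK S p.1 p.2)

section Char
variable {S : Finset ℕ} (hS : ∀ ℓ ∈ S, ℓ.Prime ∧ ℓ ≠ 3) {e : ℕ}

include hS

lemma cfgD_inj {a a' : ℕ} {T T' : Finset ℕ} (hT : T ⊆ S) (hT' : T' ⊆ S)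
    (h : cfgD S a T = cfgD S a' T') : a = a' ∧ T = T' := by
  have hfac : ∀ q, (cfgD S a T).factorization q = (cfgD S a' T').factorization q := by
    rw [h]; intro q; rfl
  have key : ∀ q, (if 3 = q then a else 0) + (if q ∈ S then kexp T q else 0)
      = (if 3 = q then a' else 0) + (if q ∈ S then kexp T' q else 0) := by
    intro q
    rw [← cfgD_factorization (hSp' hS), ← cfgD_factorization (hSp' hS)]
    exact hfac q
  constructor
  · have := key 3
    rw [if_pos rfl, if_pos rfl, if_neg (three_not_mem_S hS), if_neg (three_not_mem_S hS)] at this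
    omega
  · ext ℓ
    by_cases hℓ : ℓ ∈ S
    · have := key ℓ
      rw [if_pos hℓ, if_pos hℓ] at this
      have h3 : ¬ (3 = ℓ) := fun hh => three_not_mem_S hS (by rwa [hh])
      rw [if_neg h3, if_neg h3] at this
      unfold kexp at this
      constructor
      · intro hi
        rw [if_pos hi] at this
        by_contra hi'
        rw [if_neg hi'] at this
        omega
      · intro hi
        rw [if_pos hi] at this
        by_contra hi'
        rw [if_neg hi'] at this
        omega
    · constructor
      · intro hi; exact absurd (hT hi) hℓ
      · intro hi; exact absurd (hT' hi) hℓ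

lemma exists_cfg {d : ℕ} (he : e ≤ 2)
    (hd : IsNormalizedRadicand d ∧ radicandConductor d = 3 ^ e * ∏ ℓ ∈ S, ℓ) :
    ∃ a T, a < 3 ∧ T ⊆ S ∧ d = cfgD S a T := by
  obtain ⟨⟨hd1, hcf, _⟩, hcond⟩ := hd
  have hd0 : d ≠ 0 := by omega
  set E := d.primeFactors.erase 3 with hE
  have hEp : ∀ p ∈ E, p.Prime := fun p hp =>
    Nat.prime_of_mem_primeFactors (Finset.mem_of_mem_erase hp)
  have hSprime : ∀ ℓ ∈ S, ℓ.Prime := hSp' hS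
  set R := ∏ p ∈ E, p with hR
  set P := ∏ ℓ ∈ S, ℓ with hP
  have hR0 : R ≠ 0 := (Finset.prod_pos (fun p hp => (hEp p hp).pos)).ne'
  have hP0 : P ≠ 0 := (Finset.prod_pos (fun ℓ hℓ => (hSprime ℓ hℓ).pos)).ne'
  have hRE : R.primeFactors = E := Nat.primeFactors_prod hEp
  have hPS : P.primeFactors = S := Nat.primeFactors_prod hSprime
  set m : ℕ := if 3 ∣ d then 9 else if d % 9 = 1 ∨ d % 9 = 8 then 1 else 3 with hm
  have hcond' : m * R = 3 ^ e * P := hcond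
  have hm0 : m ≠ 0 := by rw [hm]; split <;> [norm_num; (split <;> norm_num)]
  have hRf3 : R.factorization 3 = 0 := by
    by_contra hc
    have : 3 ∈ R.primeFactors := by
      rw [← Nat.support_factorization]; exact Finsupp.mem_support_iff.mpr hc
    rw [hRE] at this
    exact (Finset.mem_erase.mp this).1 rfl
  have hPf3 : P.factorization 3 = 0 := by
    by_contra hc
    have : 3 ∈ P.primeFactors := by
      rw [← Nat.support_factorization]; exact Finsupp.mem_support_iff.mpr hc
    rw [hPS] at this
    exact three_not_mem_S hS this
  have hfe : (3 ^ e : ℕ).factorization 3 = e := by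
    rw [Nat.Prime.factorization_pow (by norm_num), Finsupp.single_apply, if_pos rfl]
  have hmf : m.factorization 3 = e := by
    have := congrArg (fun n => n.factorization 3) hcond'
    simp only [Nat.factorization_mul hm0 hR0,
      Nat.factorization_mul (pow_ne_zero e (by norm_num : (3:ℕ) ≠ 0)) hP0,
      Finsupp.add_apply] at this
    omega
  have hm3e : m = 3 ^ e := by
    rw [hm] at hmf ⊢
    split_ifs at hmf ⊢ with h1 h2
    · rw [show ((9:ℕ).factorization 3) = 2 by
        rw [show (9:ℕ) = 3 ^ 2 by norm_num, Nat.Prime.factorization_pow (by norm_num),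
          Finsupp.single_apply, if_pos rfl]] at hmf
      rw [← hmf]; norm_num
    · rw [Nat.factorization_one] at hmf
      simp at hmf
      rw [← hmf]; norm_num
    · rw [Nat.Prime.factorization_self (by norm_num)] at hmf
      rw [← hmf]; norm_num
  have hRP : R = P := by
    rw [hm3e] at hcond'
    exact Nat.eq_of_mul_eq_mul_left (pow_pos (by norm_num) e) hcond'
  have hES : E = S := by rw [← hRE, hRP, hPS]
  set a := d.factorization 3 with ha
  have ha2 : a ≤ 2 := by
    by_contra hc
    exact hcf 3 (by norm_num)
      ((Nat.Prime.pow_dvd_iff_le_factorization (by norm_num) hd0).mpr (by omega))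
  refine ⟨a, S.filter (fun ℓ => ℓ ^ 2 ∣ d), by omega, Finset.filter_subset _ _, ?_⟩
  have hcfg0 : cfgD S a (S.filter (fun ℓ => ℓ ^ 2 ∣ d)) ≠ 0 := cfgD_ne_zero hSprime a
  refine Nat.factorization_inj hd0 hcfg0 ?_
  ext q
  rw [cfgD_factorization hSprime]
  by_cases h3 : 3 = q
  · rw [if_pos h3, if_neg (fun hh => three_not_mem_S hS (h3 ▸ hh))]
    rw [← h3]
    omega
  · rw [if_neg h3]
    by_cases hqS : q ∈ S
    · have hq : q.Prime := hSprime q hqS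
      have hqE : q ∈ E := hES ▸ hqS
      have hqpf : q ∈ d.primeFactors := Finset.mem_of_mem_erase hqE
      have h1 : 1 ≤ d.factorization q := by
        rw [← Nat.support_factorization] at hqpf
        have := Finsupp.mem_support_iff.mp hqpf
        omega
      have h2 : d.factorization q ≤ 2 := by
        by_contra hc
        exact hcf q hq ((Nat.Prime.pow_dvd_iff_le_factorization hq hd0).mpr (by omega))
      rw [if_pos hqS]
      unfold kexp
      by_cases hsq : q ^ 2 ∣ d
      · have := (Nat.Prime.pow_dvd_iff_le_factorization hq hd0).mp hsq
        rw [if_pos (show q ∈ S.filter (fun ℓ => ℓ ^ 2 ∣ d) from Finset.mem_filter.mpr ⟨hqS, hsq⟩)]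
        omega
      · have hn2 : ¬ 2 ≤ d.factorization q := fun hc =>
          hsq ((Nat.Prime.pow_dvd_iff_le_factorization hq hd0).mpr hc)
        rw [if_neg (show ¬ q ∈ S.filter (fun ℓ => ℓ ^ 2 ∣ d) from fun hc => hsq (Finset.mem_filter.mp hc).2)]
        omega
    · rw [if_neg hqS, add_zero]
      by_contra hc
      have hqpf : q ∈ d.primeFactors := by
        rw [← Nat.support_factorization]
        exact Finsupp.mem_support_iff.mpr hc
      have : q ∈ E := Finset.mem_erase.mpr ⟨fun hh => h3 hh.symm, hqpf⟩
      rw [hES] at this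
      exact hqS this

lemma char_lemma (he : e ≤ 2) (d : ℕ) :
    (IsNormalizedRadicand d ∧ radicandConductor d = 3 ^ e * ∏ ℓ ∈ S, ℓ) ↔
      d ∈ (goodCfg S e).image (fun p => cfgD S p.1 p.2) := by
  classical
  constructor
  · intro hd
    obtain ⟨a, T, ha3, hT, rfl⟩ := exists_cfg hS he hd
    rw [Finset.mem_image]
    refine ⟨(a, T), ?_, rfl⟩
    rw [goodCfg, Finset.mem_filter]
    refine ⟨Finset.mem_product.mpr ⟨Finset.mem_range.mpr ha3, Finset.mem_powerset.mpr hT⟩, ?_, ?_⟩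
    · exact (conductor_eq_iff hS he (by omega)).mp hd.2
    · exact (isNorm_iff hS hT (by omega)).mp hd.1
  · intro hd
    rw [Finset.mem_image] at hd
    obtain ⟨⟨a, T⟩, hmem, rfl⟩ := hd
    rw [goodCfg, Finset.mem_filter] at hmem
    obtain ⟨hprod, hsp, hnm⟩ := hmem
    obtain ⟨ha3, hT⟩ := Finset.mem_product.mp hprod
    rw [Finset.mem_range] at ha3
    rw [Finset.mem_powerset] at hT
    exact ⟨(isNorm_iff hS hT (by omega)).mpr hnm, (conductor_eq_iff hS he (by omega)).mpr hsp⟩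

end Char

lemma half_card {α : Type*} (s : Finset α) (ι : α → α) (P : α → Prop) [DecidablePred P]
    (hmem : ∀ x ∈ s, ι x ∈ s) (hinv : ∀ x ∈ s, ι (ι x) = x)
    (hswap : ∀ x ∈ s, (P (ι x) ↔ ¬ P x)) :
    2 * (s.filter P).card = s.card := by
  classical
  have hcards : (s.filter P).card = (s.filter (fun x => ¬ P x)).card := by
    apply Finset.card_bij (fun a _ => ι a)
    · intro a ha
      rw [Finset.mem_filter] at ha ⊢
      exact ⟨hmem a ha.1, fun h => ((hswap a ha.1).mp h) ha.2⟩
    · intro a ha b hb hab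
      rw [Finset.mem_filter] at ha hb
      have := congrArg ι hab
      rwa [hinv a ha.1, hinv b hb.1] at this
    · intro b hb
      rw [Finset.mem_filter] at hb
      exact ⟨ι b, Finset.mem_filter.mpr ⟨hmem b hb.1, (hswap b hb.1).mpr hb.2⟩, hinv b hb.1⟩
  have := Finset.card_filter_add_card_filter_not (s := s) (p := P)
  omega

lemma chiSum_compl {S T : Finset ℕ} (hT : T ⊆ S) : chiSum S (S \ T) = - chiSum S T := by
  have h : chiSum S (S \ T) + chiSum S T = 0 := by
    rw [chiSum, chiSum, ← Finset.sum_add_distrib]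
    apply Finset.sum_eq_zero
    intro ℓ hℓ
    have h3 : (3 : ZMod 3) = 0 := by decide
    unfold kexp
    by_cases hℓT : ℓ ∈ T
    · rw [if_neg (fun hc => (Finset.mem_sdiff.mp hc).2 hℓT), if_pos hℓT]
      push_cast
      linear_combination (chi9 (ℓ : ZMod 9)) * h3
    · rw [if_pos (Finset.mem_sdiff.mpr ⟨hℓ, hℓT⟩), if_neg hℓT]
      push_cast
      linear_combination (chi9 (ℓ : ZMod 9)) * h3
  exact eq_neg_of_add_eq_zero_left h

section Halve
variable {S T : Finset ℕ} (hS : ∀ ℓ ∈ S, ℓ.Prime ∧ ℓ ≠ 3)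

include hS

lemma mem_of_dvd_prodX {X : Finset ℕ} (hX : X ⊆ S) {q : ℕ} (hq : q.Prime)
    (hdvd : q ∣ ∏ ℓ ∈ X, ℓ) : q ∈ X := by
  have hXp : ∀ p ∈ X, p.Prime := fun p hp => (hS p (hX hp)).1
  have h0 : (∏ ℓ ∈ X, ℓ) ≠ 0 := (Finset.prod_pos (fun p hp => (hXp p hp).pos)).ne'
  have := Nat.mem_primeFactors.mpr ⟨hq, hdvd, h0⟩
  rwa [Nat.primeFactors_prod hXp] at this

lemma three_not_dvd_prodX {X : Finset ℕ} (hX : X ⊆ S) : ¬ (3 ∣ ∏ ℓ ∈ X, ℓ) := fun h =>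
  three_not_mem_S hS (hX (mem_of_dvd_prodX hS hX (by norm_num) h))

lemma prods_ne (hT : T ⊆ S) (hne : S.Nonempty) : (∏ ℓ ∈ T, ℓ) ≠ ∏ ℓ ∈ S \ T, ℓ := by
  intro heq
  obtain ⟨ℓ, hℓ⟩ := hne
  have hq : ℓ.Prime := (hS ℓ hℓ).1
  by_cases hℓT : ℓ ∈ T
  · have hdvd : ℓ ∣ ∏ x ∈ T, x := Finset.dvd_prod_of_mem _ hℓT
    rw [heq] at hdvd
    have := mem_of_dvd_prodX hS (Finset.sdiff_subset) hq hdvd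
    exact (Finset.mem_sdiff.mp this).2 hℓT
  · have hdvd : ℓ ∣ ∏ x ∈ S \ T, x := Finset.dvd_prod_of_mem _ (Finset.mem_sdiff.mpr ⟨hℓ, hℓT⟩)
    rw [← heq] at hdvd
    exact hℓT (mem_of_dvd_prodX hS hT hq hdvd)

lemma normOK_iota (hT : T ⊆ S) {a : ℕ} (ha : a < 3) (h : a ≠ 0 ∨ S.Nonempty) :
    normOK S (if a = 0 then 0 else 3 - a) (S \ T) ↔ ¬ normOK S a T := by
  have hsd : S \ (S \ T) = T := Finset.sdiff_sdiff_eq_self hT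
  unfold normOK
  rw [hsd]
  interval_cases a
  · simp only [if_pos rfl, OfNat.zero_ne_ofNat, if_false, one_mul,
      show (0 ≠ 1) from by omega, Nat.zero_ne_one]
    have hne : (∏ ℓ ∈ T, ℓ) ≠ ∏ ℓ ∈ S \ T, ℓ :=
      prods_ne hS hT (h.resolve_left (fun hc => hc rfl))
    norm_num
    omega
  · norm_num
    have hne : 3 * (∏ ℓ ∈ S \ T, ℓ) ≠ ∏ ℓ ∈ T, ℓ := by
      intro hc
      exact three_not_dvd_prodX hS hT ⟨_, hc.symm⟩
    omega
  · norm_num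
    have hne : (∏ ℓ ∈ S \ T, ℓ) ≠ 3 * ∏ ℓ ∈ T, ℓ := by
      intro hc
      exact three_not_dvd_prodX hS (Finset.sdiff_subset) ⟨_, hc⟩
    omega

lemma halve_goodCfg {e : ℕ} (he : e ≤ 2) (hne : e = 0 → S.Nonempty) :
    2 * (goodCfg S e).card =
      ((Finset.range 3 ×ˢ S.powerset).filter (fun p : ℕ × Finset ℕ => speciesOK S e p.1 p.2)).card := by
  classical
  set A := (Finset.range 3 ×ˢ S.powerset).filter (fun p : ℕ × Finset ℕ => speciesOK S e p.1 p.2) with hA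
  have hgood : (goodCfg S e).card = (A.filter (fun p : ℕ × Finset ℕ => normOK S p.1 p.2)).card := by
    rw [goodCfg, hA, Finset.filter_filter]
  rw [hgood]
  have hbasic : ∀ x ∈ A, x.1 < 3 ∧ x.2 ⊆ S ∧ speciesOK S e x.1 x.2 := by
    intro x hx
    rw [hA, Finset.mem_filter] at hx
    obtain ⟨hp, hsp⟩ := hx
    obtain ⟨h1, h2⟩ := Finset.mem_product.mp hp
    exact ⟨Finset.mem_range.mp h1, Finset.mem_powerset.mp h2, hsp⟩
  have hkey : ∀ x ∈ A, x.1 ≠ 0 ∨ S.Nonempty := by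
    intro x hx
    obtain ⟨h1, h2, hsp⟩ := hbasic x hx
    unfold speciesOK at hsp
    by_cases he2 : e = 2
    · rw [if_pos he2] at hsp; exact Or.inl hsp
    · rw [if_neg he2] at hsp
      obtain ⟨ha0, hiff⟩ := hsp
      by_cases he0 : e = 0
      · exact Or.inr (hne he0)
      · right
        by_contra hc
        rw [Finset.not_nonempty_iff_eq_empty] at hc
        have : chiSum S x.2 = 0 := by rw [chiSum, hc, Finset.sum_empty]
        have := hiff.mp this
        omega
  apply half_card A (fun p => (if p.1 = 0 then 0 else 3 - p.1, S \ p.2))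
  · intro x hx
    obtain ⟨h1, h2, hsp⟩ := hbasic x hx
    rw [hA, Finset.mem_filter]
    constructor
    · apply Finset.mem_product.mpr
      constructor
      · apply Finset.mem_range.mpr; dsimp only; split <;> omega
      · exact Finset.mem_powerset.mpr (Finset.sdiff_subset)
    · unfold speciesOK at hsp ⊢
      by_cases he2 : e = 2
      · rw [if_pos he2] at hsp ⊢
        dsimp only
        split <;> omega
      · rw [if_neg he2] at hsp ⊢
        obtain ⟨ha0, hiff⟩ := hsp
        refine ⟨by simp [ha0], ?_⟩
        rw [chiSum_compl h2, neg_eq_zero]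
        exact hiff
  · rintro ⟨a, T⟩ hx
    obtain ⟨h1, h2, -⟩ := hbasic _ hx
    dsimp only at h1 h2 ⊢
    rw [Prod.mk.injEq]
    constructor
    · rcases (by omega : a = 0 ∨ a = 1 ∨ a = 2) with h|h|h <;> subst h <;> norm_num
    · exact Finset.sdiff_sdiff_eq_self h2
  · intro x hx
    obtain ⟨h1, h2, -⟩ := hbasic x hx
    exact normOK_iota hS h2 h1 (hkey x hx)

end Halve

lemma A2_eq (S : Finset ℕ) :
    ((Finset.range 3 ×ˢ S.powerset).filter (fun p : ℕ × Finset ℕ => speciesOK S 2 p.1 p.2)) =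
      ({1, 2} : Finset ℕ) ×ˢ S.powerset := by
  ext ⟨a, T⟩
  simp only [Finset.mem_filter, Finset.mem_product, Finset.mem_range, Finset.mem_powerset,
    Finset.mem_insert, Finset.mem_singleton, speciesOK, eq_self_iff_true, if_true]
  constructor
  · rintro ⟨⟨h1, h2⟩, h3⟩; exact ⟨by omega, h2⟩
  · rintro ⟨h1, h2⟩; exact ⟨⟨by omega, h2⟩, by omega⟩

lemma Ae_eq (S : Finset ℕ) {e : ℕ} (he2 : e ≠ 2) :
    ((Finset.range 3 ×ˢ S.powerset).filter (fun p : ℕ × Finset ℕ => speciesOK S e p.1 p.2)) =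
      ({0} : Finset ℕ) ×ˢ (S.powerset.filter (fun T => chiSum S T = 0 ↔ e = 0)) := by
  ext ⟨a, T⟩
  simp only [Finset.mem_filter, Finset.mem_product, Finset.mem_range, Finset.mem_powerset,
    Finset.mem_singleton, speciesOK, if_neg he2]
  constructor
  · rintro ⟨⟨h1, h2⟩, h3, h4⟩; exact ⟨h3, h2, h4⟩
  · rintro ⟨h1, h2, h3⟩; exact ⟨⟨by omega, h2⟩, h1, h3⟩

lemma step_count (S : Finset ℕ) (a : ℕ) (ha : a ∉ S) (c : ℕ → ZMod 3) (t : ZMod 3) :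
    ((insert a S).powerset.filter
        (fun T => ∑ ℓ ∈ insert a S, (kexp T ℓ : ZMod 3) * c ℓ = t)).card
    = (S.powerset.filter (fun T => ∑ ℓ ∈ S, (kexp T ℓ : ZMod 3) * c ℓ = t - c a)).card
    + (S.powerset.filter (fun T => ∑ ℓ ∈ S, (kexp T ℓ : ZMod 3) * c ℓ = t - 2 * c a)).card := by
  classical
  have hdisj : Disjoint (S.powerset.filter
        (fun T => ∑ ℓ ∈ insert a S, (kexp T ℓ : ZMod 3) * c ℓ = t))
      ((S.powerset.image (insert a)).filter
        (fun T => ∑ ℓ ∈ insert a S, (kexp T ℓ : ZMod 3) * c ℓ = t)) := by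
    apply Finset.disjoint_filter_filter
    rw [Finset.disjoint_left]
    intro T hT hT'
    rw [Finset.mem_powerset] at hT
    obtain ⟨T', hT', rfl⟩ := Finset.mem_image.mp hT'
    exact ha (hT (Finset.mem_insert_self a T'))
  rw [Finset.powerset_insert, Finset.filter_union, Finset.card_union_of_disjoint hdisj]
  congr 1
  · apply congrArg Finset.card
    apply Finset.filter_congr
    intro T hT
    rw [Finset.mem_powerset] at hT
    have haT : a ∉ T := fun h => ha (hT h)
    rw [Finset.sum_insert ha]
    unfold kexp
    rw [if_neg haT, Nat.cast_one, one_mul]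
    constructor
    · intro h; rw [← h]; ring
    · intro h; rw [h]; ring
  · rw [Finset.filter_image]
    rw [Finset.card_image_of_injOn]
    · apply congrArg Finset.card
      apply Finset.filter_congr
      intro T hT
      rw [Finset.mem_powerset] at hT
      have haT : a ∉ T := fun h => ha (hT h)
      rw [Finset.sum_insert ha]
      have h2 : (kexp (insert a T) a : ZMod 3) = 2 := by
        unfold kexp; rw [if_pos (Finset.mem_insert_self a T)]; norm_num
      have hrest : ∑ ℓ ∈ S, (kexp (insert a T) ℓ : ZMod 3) * c ℓ
          = ∑ ℓ ∈ S, (kexp T ℓ : ZMod 3) * c ℓ := by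
        apply Finset.sum_congr rfl
        intro ℓ hℓ
        have hla : ℓ ≠ a := fun h => ha (h ▸ hℓ)
        unfold kexp
        have h : (ℓ ∈ insert a T) = (ℓ ∈ T) := by
          simp [Finset.mem_insert, hla]
        simp only [h]
      rw [h2, hrest]
      constructor
      · intro h; rw [← h]; ring
      · intro h; rw [h]; ring
    · intro T hT T' hT' h
      rw [Finset.mem_coe, Finset.mem_filter, Finset.mem_powerset] at hT hT'
      have haT : a ∉ T := fun hc => ha (hT.1 hc)
      have haT' : a ∉ T' := fun hc => ha (hT'.1 hc)
      rw [← Finset.erase_insert haT, ← Finset.erase_insert haT', h]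

lemma count_zmod (c : ℕ → ZMod 3) (S : Finset ℕ) :
    ∀ t : ZMod 3,
      (((S.powerset.filter (fun T => ∑ ℓ ∈ S, (kexp T ℓ : ZMod 3) * c ℓ = t)).card : ℚ)) * 3 =
        if t = 0 then
          2 ^ (S.filter (fun ℓ => c ℓ = 0)).card *
            (2 ^ (S.filter (fun ℓ => ¬ c ℓ = 0)).card
              + 2 * (-1) ^ (S.filter (fun ℓ => ¬ c ℓ = 0)).card)
        else
          2 ^ (S.filter (fun ℓ => c ℓ = 0)).card *
            (2 ^ (S.filter (fun ℓ => ¬ c ℓ = 0)).card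
              - (-1) ^ (S.filter (fun ℓ => ¬ c ℓ = 0)).card) := by
  classical
  have htri : ∀ x : ZMod 3, x = 0 ∨ x = 1 ∨ x = 2 := by decide
  induction S using Finset.induction with
  | empty =>
    intro t
    rw [Finset.powerset_empty]
    by_cases ht : t = 0
    · subst ht
      rw [if_pos rfl]
      rw [Finset.filter_singleton, if_pos (by rw [Finset.sum_empty])]
      simp
      norm_num
    · rw [if_neg ht]
      rw [Finset.filter_singleton, if_neg (by rw [Finset.sum_empty]; exact fun h => ht h.symm)]
      simp
  | @insert a S ha IH =>
    intro t
    have hstep := step_count S a ha c t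
    have hnm : a ∉ S.filter (fun ℓ => c ℓ = 0) := fun hc => ha (Finset.mem_filter.mp hc).1
    have hnm' : a ∉ S.filter (fun ℓ => ¬ c ℓ = 0) := fun hc => ha (Finset.mem_filter.mp hc).1
    rcases htri (c a) with hca | hca | hca
    · have h1 : t - c a = t := by rw [hca]; ring
      have h2 : t - 2 * c a = t := by rw [hca]; ring
      rw [hstep, h1, h2]
      have hu' : ((insert a S).filter (fun ℓ => c ℓ = 0)).card
          = (S.filter (fun ℓ => c ℓ = 0)).card + 1 := by
        rw [Finset.filter_insert, if_pos hca, Finset.card_insert_of_notMem hnm]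
      have hv' : ((insert a S).filter (fun ℓ => ¬ c ℓ = 0)).card
          = (S.filter (fun ℓ => ¬ c ℓ = 0)).card := by
        rw [Finset.filter_insert, if_neg (not_not_intro hca)]
      rw [hu', hv']
      have ih := IH t
      by_cases ht : t = 0
      · rw [if_pos ht] at ih ⊢
        push_cast
        linear_combination 2 * ih
      · rw [if_neg ht] at ih ⊢
        push_cast
        linear_combination 2 * ih
    · have hu' : ((insert a S).filter (fun ℓ => c ℓ = 0)).card
          = (S.filter (fun ℓ => c ℓ = 0)).card := by
        rw [Finset.filter_insert, if_neg (by rw [hca]; decide)]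
      have hv' : ((insert a S).filter (fun ℓ => ¬ c ℓ = 0)).card
          = (S.filter (fun ℓ => ¬ c ℓ = 0)).card + 1 := by
        rw [Finset.filter_insert, if_pos (by rw [hca]; decide),
          Finset.card_insert_of_notMem hnm']
      rw [hstep, hca, hu', hv']
      rcases htri t with ht | ht | ht <;> subst ht
      · rw [show (0 : ZMod 3) - 1 = 2 by decide, show (0 : ZMod 3) - 2 * 1 = 1 by decide]
        have ih1 := IH 1; have ih2 := IH 2
        rw [if_neg (by decide)] at ih1 ih2
        rw [if_pos rfl]
        push_cast
        linear_combination ih1 + ih2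
      · rw [show (1 : ZMod 3) - 1 = 0 by decide, show (1 : ZMod 3) - 2 * 1 = 2 by decide]
        have ih0 := IH 0; have ih2 := IH 2
        rw [if_pos rfl] at ih0
        rw [if_neg (by decide)] at ih2
        rw [if_neg (by decide)]
        push_cast
        linear_combination ih0 + ih2
      · rw [show (2 : ZMod 3) - 1 = 1 by decide, show (2 : ZMod 3) - 2 * 1 = 0 by decide]
        have ih0 := IH 0; have ih1 := IH 1
        rw [if_pos rfl] at ih0
        rw [if_neg (by decide)] at ih1
        rw [if_neg (by decide)]
        push_cast
        linear_combination ih0 + ih1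
    · have hu' : ((insert a S).filter (fun ℓ => c ℓ = 0)).card
          = (S.filter (fun ℓ => c ℓ = 0)).card := by
        rw [Finset.filter_insert, if_neg (by rw [hca]; decide)]
      have hv' : ((insert a S).filter (fun ℓ => ¬ c ℓ = 0)).card
          = (S.filter (fun ℓ => ¬ c ℓ = 0)).card + 1 := by
        rw [Finset.filter_insert, if_pos (by rw [hca]; decide),
          Finset.card_insert_of_notMem hnm']
      rw [hstep, hca, hu', hv']
      rcases htri t with ht | ht | ht <;> subst ht
      · rw [show (0 : ZMod 3) - 2 = 1 by decide, show (0 : ZMod 3) - 2 * 2 = 2 by decide]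
        have ih1 := IH 1; have ih2 := IH 2
        rw [if_neg (by decide)] at ih1 ih2
        rw [if_pos rfl]
        push_cast
        linear_combination ih1 + ih2
      · rw [show (1 : ZMod 3) - 2 = 2 by decide, show (1 : ZMod 3) - 2 * 2 = 0 by decide]
        have ih0 := IH 0; have ih2 := IH 2
        rw [if_pos rfl] at ih0
        rw [if_neg (by decide)] at ih2
        rw [if_neg (by decide)]
        push_cast
        linear_combination ih0 + ih2
      · rw [show (2 : ZMod 3) - 2 = 0 by decide, show (2 : ZMod 3) - 2 * 2 = 1 by decide]
        have ih0 := IH 0; have ih1 := IH 1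
        rw [if_pos rfl] at ih0
        rw [if_neg (by decide)] at ih1
        rw [if_neg (by decide)]
        push_cast
        linear_combination ih0 + ih1

lemma cast9_eq (d k : ℕ) (hk : k < 9) : ((d : ZMod 9) = ((k : ℕ) : ZMod 9)) ↔ d % 9 = k := by
  rw [ZMod.natCast_eq_natCast_iff', Nat.mod_eq_of_lt hk]

lemma chi9_ne_zero_iff : ∀ x ∈ U9, (¬ chi9 x = 0 ↔ (x = 2 ∨ x = 4 ∨ x = 5 ∨ x = 7)) := by decide

lemma chi9_zero_iff_mod {ℓ : ℕ} (hp : ℓ.Prime) (h3 : ℓ ≠ 3) :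
    (chi9 (ℓ : ZMod 9) = 0) ↔ (ℓ % 9 = 1 ∨ ℓ % 9 = 8) := by
  have hU := cast_mem_U9 hp h3
  rw [chi9_eq_zero_iff _ hU]
  rw [show (1 : ZMod 9) = ((1 : ℕ) : ZMod 9) by norm_num,
    show (8 : ZMod 9) = ((8 : ℕ) : ZMod 9) by norm_num,
    cast9_eq ℓ 1 (by norm_num), cast9_eq ℓ 8 (by norm_num)]

lemma chi9_nzero_iff_mod {ℓ : ℕ} (hp : ℓ.Prime) (h3 : ℓ ≠ 3) :
    (¬ chi9 (ℓ : ZMod 9) = 0) ↔ (ℓ % 9 = 2 ∨ ℓ % 9 = 4 ∨ ℓ % 9 = 5 ∨ ℓ % 9 = 7) := by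
  have hU := cast_mem_U9 hp h3
  rw [chi9_ne_zero_iff _ hU]
  rw [show (2 : ZMod 9) = ((2 : ℕ) : ZMod 9) by norm_num,
    show (4 : ZMod 9) = ((4 : ℕ) : ZMod 9) by norm_num,
    show (5 : ZMod 9) = ((5 : ℕ) : ZMod 9) by norm_num,
    show (7 : ZMod 9) = ((7 : ℕ) : ZMod 9) by norm_num,
    cast9_eq ℓ 2 (by norm_num), cast9_eq ℓ 4 (by norm_num),
    cast9_eq ℓ 5 (by norm_num), cast9_eq ℓ 7 (by norm_num)]

theorem multiplicity_of_conductor'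
    (e n : ℕ) (he : e ≤ 2) (S : Finset ℕ) (hcard : S.card = n)
    (hprime : ∀ ℓ ∈ S, ℓ.Prime ∧ ℓ ≠ 3)
    (hn : e = 0 → 1 ≤ n)
    (f : ℕ) (hf : f = 3 ^ e * ∏ ℓ ∈ S, ℓ)
    (u v : ℕ)
    (hu : u = (S.filter (fun ℓ => ℓ % 9 = 1 ∨ ℓ % 9 = 8)).card)
    (hv : v = (S.filter (fun ℓ =>
      ℓ % 9 = 2 ∨ ℓ % 9 = 4 ∨ ℓ % 9 = 5 ∨ ℓ % 9 = 7)).card) :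
    (e = 2 → ((Nat.card {d : ℕ // IsNormalizedRadicand d ∧ radicandConductor d = f}) : ℚ) = 2 ^ n) ∧
    (e = 1 → ((Nat.card {d : ℕ // IsNormalizedRadicand d ∧ radicandConductor d = f}) : ℚ) = 2 ^ u * ((2:ℚ) ^ v - (-1) ^ v) / 3) ∧
    (e = 0 → ((Nat.card {d : ℕ // IsNormalizedRadicand d ∧ radicandConductor d = f}) : ℚ) = 2 ^ u * ((2:ℚ) ^ v / 2 + (-1) ^ v) / 3) := by
  classical
  subst hf
  -- Step 1: multiplicity equals the number of good configurations
  have hm : Nat.card {d : ℕ // IsNormalizedRadicand d ∧ radicandConductor d = 3 ^ e * ∏ ℓ ∈ S, ℓ}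
      = (goodCfg S e).card := by
    have h1 : Nat.card {d : ℕ // IsNormalizedRadicand d ∧ radicandConductor d = 3 ^ e * ∏ ℓ ∈ S, ℓ}
        = ((goodCfg S e).image (fun p : ℕ × Finset ℕ => cfgD S p.1 p.2)).card := by
      rw [Nat.card_congr (Equiv.subtypeEquivRight
        (fun d => char_lemma hprime he d))]
      rw [Nat.card_eq_fintype_card, Fintype.card_coe]
    rw [h1]
    apply Finset.card_image_of_injOn
    intro p hp q hq hpq
    rw [goodCfg, Finset.mem_coe, Finset.mem_filter] at hp hq
    obtain ⟨hp1, -⟩ := hp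
    obtain ⟨hq1, -⟩ := hq
    have hpT := Finset.mem_powerset.mp (Finset.mem_product.mp hp1).2
    have hqT := Finset.mem_powerset.mp (Finset.mem_product.mp hq1).2
    obtain ⟨h1, h2⟩ := cfgD_inj hprime hpT hqT hpq
    exact Prod.ext h1 h2
  -- Step 2: halving
  have hhalf : 2 * (goodCfg S e).card =
      ((Finset.range 3 ×ˢ S.powerset).filter
        (fun p : ℕ × Finset ℕ => speciesOK S e p.1 p.2)).card :=
    halve_goodCfg hprime he (fun h0 => Finset.card_pos.mp (by omega))
  -- Step 3: u, v translations
  have huchi : (S.filter (fun ℓ : ℕ => chi9 (ℓ : ZMod 9) = 0)).card = u := by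
    rw [hu]
    exact congrArg Finset.card (Finset.filter_congr
      (fun ℓ hℓ => chi9_zero_iff_mod (hprime ℓ hℓ).1 (hprime ℓ hℓ).2))
  have hvchi : (S.filter (fun ℓ : ℕ => ¬ chi9 (ℓ : ZMod 9) = 0)).card = v := by
    rw [hv]
    exact congrArg Finset.card (Finset.filter_congr
      (fun ℓ hℓ => chi9_nzero_iff_mod (hprime ℓ hℓ).1 (hprime ℓ hℓ).2))
  have huv : u + v = n := by
    rw [← huchi, ← hvchi, ← hcard]
    exact Finset.card_filter_add_card_filter_not (p := fun ℓ : ℕ => chi9 (ℓ : ZMod 9) = 0)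
  -- Step 4: count of zero-sum subsets
  set N0 := (S.powerset.filter (fun T => chiSum S T = 0)).card with hN0def
  set Nneg := (S.powerset.filter (fun T => ¬ chiSum S T = 0)).card with hNnegdef
  have hpart : N0 + Nneg = 2 ^ n := by
    rw [hN0def, hNnegdef, ← hcard, ← Finset.card_powerset]
    exact Finset.card_filter_add_card_filter_not (p := fun T => chiSum S T = 0)
  have hN0Q : (N0 : ℚ) * 3 = 2 ^ u * (2 ^ v + 2 * (-1) ^ v) := by
    have hset : S.powerset.filter (fun T => chiSum S T = 0)
        = S.powerset.filter
          (fun T => ∑ ℓ ∈ S, (kexp T ℓ : ZMod 3) * chi9 (ℓ : ZMod 9) = 0) :=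
      Finset.filter_congr (fun T _ => by rw [chiSum])
    have := count_zmod (fun ℓ : ℕ => chi9 (ℓ : ZMod 9)) S 0
    rw [if_pos rfl, huchi, hvchi] at this
    rw [hN0def, hset]
    exact this
  -- Final assembly
  refine ⟨?_, ?_, ?_⟩
  · intro he2
    subst he2
    rw [hm]
    have hA : ((Finset.range 3 ×ˢ S.powerset).filter
        (fun p : ℕ × Finset ℕ => speciesOK S 2 p.1 p.2)).card = 2 * 2 ^ n := by
      rw [A2_eq, Finset.card_product, Finset.card_powerset, hcard,
        show ({1, 2} : Finset ℕ).card = 2 from rfl]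
    have h2m : 2 * (goodCfg S 2).card = 2 * 2 ^ n := by rw [hhalf, hA]
    have : (goodCfg S 2).card = 2 ^ n := by omega
    rw [this]
    push_cast
    ring
  · intro he1
    subst he1
    rw [hm]
    have hA : ((Finset.range 3 ×ˢ S.powerset).filter
        (fun p : ℕ × Finset ℕ => speciesOK S 1 p.1 p.2)).card = Nneg := by
      rw [Ae_eq S (by norm_num), Finset.card_product, Finset.card_singleton, one_mul,
        hNnegdef]
      exact congrArg Finset.card (Finset.filter_congr (fun T _ => by simp))
    have h2m : 2 * ((goodCfg S 1).card : ℚ) = Nneg := by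
      have hnat : 2 * (goodCfg S 1).card = Nneg := by rw [hhalf, hA]
      exact_mod_cast hnat
    have hpartQ : (N0 : ℚ) + Nneg = 2 ^ n := by exact_mod_cast congrArg (Nat.cast (R := ℚ)) hpart
    have hX : (2 : ℚ) ^ n = 2 ^ u * 2 ^ v := by rw [← huv, pow_add]
    linear_combination (1/2) * h2m + (1/2) * hpartQ - (1/6) * hN0Q + (1/2) * hX
  · intro he0
    subst he0
    rw [hm]
    have hA : ((Finset.range 3 ×ˢ S.powerset).filter
        (fun p : ℕ × Finset ℕ => speciesOK S 0 p.1 p.2)).card = N0 := by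
      rw [Ae_eq S (by norm_num), Finset.card_product, Finset.card_singleton, one_mul, hN0def]
      exact congrArg Finset.card (Finset.filter_congr (fun T _ => by simp))
    have h2m : 2 * ((goodCfg S 0).card : ℚ) = N0 := by
      have hnat : 2 * (goodCfg S 0).card = N0 := by rw [hhalf, hA]
      exact_mod_cast hnat
    linear_combination (1/2) * h2m + (1/6) * hN0Q

/-- **Theorem 2.3** (multiplicity of conductors): if `f = 3^e·ℓ₁⋯ℓ_n` with distinct primes
`ℓ_j ≠ 3`, `u` of which are `≡ ±1 (mod 9)` and `v` of which are `≡ ±2, ±4 (mod 9)`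
(`n = u + v`), then `m(f) = 2^n` if `e = 2`, `m(f) = 2^u·X_v` if `e = 1`, and
`m(f) = 2^u·X_{v-1}` if `e = 0`. -/
theorem multiplicity_of_conductor
    (e n : ℕ) (he : e ≤ 2) (S : Finset ℕ) (hcard : S.card = n)
    (hprime : ∀ ℓ ∈ S, ℓ.Prime ∧ ℓ ≠ 3)
    (hn : e = 0 → 1 ≤ n)
    (f : ℕ) (hf : f = 3 ^ e * ∏ ℓ ∈ S, ℓ)
    (u v : ℕ)
    (hu : u = (S.filter (fun ℓ => ℓ % 9 = 1 ∨ ℓ % 9 = 8)).card)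
    (hv : v = (S.filter (fun ℓ =>
      ℓ % 9 = 2 ∨ ℓ % 9 = 4 ∨ ℓ % 9 = 5 ∨ ℓ % 9 = 7)).card) :
    (e = 2 → (conductorMultiplicity f : ℚ) = 2 ^ n) ∧
    (e = 1 → (conductorMultiplicity f : ℚ) = 2 ^ u * Xseq (v : ℤ)) ∧
    (e = 0 → (conductorMultiplicity f : ℚ) = 2 ^ u * Xseq ((v : ℤ) - 1)) := by
  have H := multiplicity_of_conductor' e n he S hcard hprime hn f hf u v hu hv
  refine ⟨fun h => ?_, fun h => ?_, fun h => ?_⟩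
  · rw [conductorMultiplicity]
    exact H.1 h
  · rw [conductorMultiplicity]
    have hval := H.2.1 h
    rw [hval, Xseq, zpow_natCast, zpow_natCast]
    ring
  · rw [conductorMultiplicity]
    have hval := H.2.2 h
    have hz2 : (2 : ℚ) ^ ((v : ℤ) - 1) = 2 ^ v / 2 := by
      rw [zpow_sub₀ (by norm_num : (2 : ℚ) ≠ 0), zpow_natCast, zpow_one]
    have hz1 : (-1 : ℚ) ^ ((v : ℤ) - 1) = -(-1 : ℚ) ^ v := by
      rw [zpow_sub₀ (by norm_num : (-1 : ℚ) ≠ 0), zpow_natCast, zpow_one]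
      ring
    rw [hval, Xseq, hz2, hz1]
    ring

end
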